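/- Let G be a finite group, χ an irreducible complex character of G, and g ∈ G with conjugacy class K = g^G. If gcd(|K|, χ(1)) = 1, then either χ(g) = 0 or |χ(g)| = χ(1). -/

import Mathlib

open CategoryTheory Polynomial

section aux

lemma multiset_abs_sum_le (u : Multiset ℂ) (h : ∀ z ∈ u, ‖z‖ = 1) :
    ‖u.sum‖ ≤ u.card := by
  induction u using Multiset.induction_on with
  | empty => simp
  | cons a t ih =>
    rw [Multiset.sum_cons, Multiset.card_cons]
    refine le_trans (norm_add_le _ _) ?_
    push_cast
    rw [h a (Multiset.mem_cons_self a t)]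
    have := ih (fun z hz => h z (Multiset.mem_cons_of_mem hz))
    linarith

lemma multiset_sum_integral {R : Type*} [CommRing R] (u : Multiset R)
    (h : ∀ z ∈ u, IsIntegral ℤ z) : IsIntegral ℤ u.sum := by
  induction u using Multiset.induction_on with
  | empty => simpa using isIntegral_zero
  | cons a t ih =>
    rw [Multiset.sum_cons]
    exact (h a (Multiset.mem_cons_self a t)).add
      (ih (fun z hz => h z (Multiset.mem_cons_of_mem hz)))

lemma pow_root_integral {R : Type*} [CommRing R] (x : R) (n : ℕ) (hn : 0 < n)
    (hx : x ^ n = 1) : IsIntegral ℤ x := by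
  refine ⟨Polynomial.X ^ n - Polynomial.C 1, Polynomial.monic_X_pow_sub_C 1 hn.ne', ?_⟩
  simp [hx]

variable {G : Type} [Group G]

lemma schur_scalar (V : FDRep ℂ G) [Simple V] (T : V →ₗ[ℂ] V)
    (hT : ∀ x : G, T ∘ₗ V.ρ x = (V.ρ x) ∘ₗ T) :
    ∃ c : ℂ, T = c • LinearMap.id := by
  let f : V ⟶ V := ⟨FGModuleCat.ofHom T, fun x => ?_⟩
  · obtain ⟨c, hc⟩ := CategoryTheory.endomorphism_simple_eq_smul_id (𝕜 := ℂ) f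
    refine ⟨c, ?_⟩
    have := congr_arg (fun h : V ⟶ V => h.hom.hom.hom) hc
    ext v
    exact (congr_fun (congr_arg (fun (h : V →ₗ[ℂ] V) => (h : V → V)) this) v).symm
  · ext v
    exact congr_fun (congr_arg (fun (h : V →ₗ[ℂ] V) => (h : V → V)) (hT x)) v

lemma ringrange_integral [Fintype G] (V : FDRep ℂ G) (T : V →ₗ[ℂ] V)
    (hT : T ∈ Submodule.span ℤ (Set.range fun x : G => (V.ρ x : V →ₗ[ℂ] V))) :
    IsIntegral ℤ T := by
  classical
  let S : Subalgebra ℤ (V →ₗ[ℂ] V) := Algebra.adjoin ℤ (Set.range fun x : G => (V.ρ x : V →ₗ[ℂ] V))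
  have hfg : S.toSubmodule.FG := by
    have h1 : Submonoid.closure (Set.range fun x : G => (V.ρ x : V →ₗ[ℂ] V)) =
        MonoidHom.mrange (V.ρ : G →* (V →ₗ[ℂ] V)) := by
      apply le_antisymm
      · rw [Submonoid.closure_le]; rintro _ ⟨x, rfl⟩; exact ⟨x, rfl⟩
      · rintro _ ⟨x, rfl⟩; exact Submonoid.subset_closure ⟨x, rfl⟩
    have h2 : (S.toSubmodule : Submodule ℤ (V →ₗ[ℂ] V)) =
        Submodule.span ℤ (Set.range fun x : G => (V.ρ x : V →ₗ[ℂ] V)) := by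
      rw [Algebra.adjoin_eq_span, h1]
      congr 1
    rw [h2]
    exact Submodule.fg_span (Set.finite_range _)
  exact IsIntegral.of_mem_of_fg S hfg T (by
    rw [← Subalgebra.mem_toSubmodule] at *
    exact le_trans (Submodule.span_le.mpr (fun y hy => Algebra.subset_adjoin hy)) le_rfl hT)

lemma trace_multiset {V : Type} [AddCommGroup V] [Module ℂ V] [FiniteDimensional ℂ V]
    (f : V →ₗ[ℂ] V) (n : ℕ) (hf : f ^ n = 1) :
    ∃ m : Multiset ℂ, m.card = Module.finrank ℂ V ∧ (∀ lam ∈ m, lam ^ n = 1) ∧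
      LinearMap.trace ℂ V f = m.sum := by
  classical
  let b := Module.finBasis ℂ V
  let M := LinearMap.toMatrix b b f
  have hMn : M ^ n = 1 := by
    have h := map_pow (LinearMap.toMatrixAlgEquiv b) f n
    rw [hf, map_one] at h
    exact h.symm ▸ rfl
  refine ⟨M.charpoly.roots, ?_, ?_, ?_⟩
  · rw [(Polynomial.splits_iff_card_roots.mp (IsAlgClosed.splits M.charpoly)),
      Matrix.charpoly_natDegree_eq_dim, Fintype.card_fin]
  · intro lam hlam
    have hroot : M.charpoly.IsRoot lam := Polynomial.isRoot_of_mem_roots hlam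
    have hdet : ((Matrix.scalar (Fin (Module.finrank ℂ V)) lam) - M).det = 0 := by
      have := _root_.eval_det (Matrix.charmatrix M) lam
      rw [Matrix.matPolyEquiv_charmatrix] at this
      simpa [Matrix.charpoly] using (hroot.symm.trans this).symm
    obtain ⟨v, hv, hmv⟩ := Matrix.exists_mulVec_eq_zero_iff.mpr hdet
    have hMv : M.mulVec v = lam • v := by
      rw [Matrix.sub_mulVec, sub_eq_zero] at hmv
      rw [← hmv]
      funext i
      simp [Matrix.scalar, Matrix.mulVec_diagonal, Pi.smul_apply, smul_eq_mul]
    have hpow : ∀ k : ℕ, (M ^ k).mulVec v = lam ^ k • v := by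
      intro k
      induction k with
      | zero => simp [Matrix.one_mulVec]
      | succ k ih =>
        rw [pow_succ, ← Matrix.mulVec_mulVec, hMv, Matrix.mulVec_smul, ih, pow_succ,
          smul_smul, mul_comm]
    have := hpow n
    rw [hMn, Matrix.one_mulVec] at this
    obtain ⟨i, hi⟩ := Function.ne_iff.mp hv
    have h2 := congr_fun this i
    simp only [Pi.smul_apply, smul_eq_mul] at h2
    exact mul_right_cancel₀ hi (h2.symm.trans (one_mul _).symm)
  · rw [LinearMap.trace_eq_matrix_trace ℂ b f, Matrix.trace_eq_sum_roots_charpoly]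

end aux

/-- `χ` is the character of some irreducible finite-dimensional complex representation
of the group `G`. -/
def IsIrredChar (G : Type) [Monoid G] (χ : G → ℂ) : Prop :=
  ∃ V : FDRep ℂ G, CategoryTheory.Simple V ∧ χ = FDRep.character V

/-- If `χ` is an irreducible complex character of a finite group `G` of degree `d = χ 1`,
`g ∈ G` and the size of the conjugacy class of `g` is coprime to `d`, then either
`χ g = 0` or `|χ g| = χ 1`. -/
theorem char_vanishing_or_central {G : Type} [Group G] [Fintype G]
    (χ : G → ℂ) (hχ : IsIrredChar G χ) (g : G)
    (d : ℕ) (hd : χ 1 = d)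
    (hcop : Nat.Coprime (Nat.card {h : G | IsConj g h}) d) :
    χ g = 0 ∨ ‖χ g‖ = d := by
  classical
  obtain ⟨V, hsimple, hchar⟩ := hχ
  haveI := hsimple
  -- degree
  have hfinrank : Module.finrank ℂ V = d := by
    have h1 : χ 1 = (Module.finrank ℂ V : ℂ) := by rw [hchar]; exact FDRep.char_one V
    exact_mod_cast h1.symm.trans hd
  have hd0 : 0 < d := by
    rcases Nat.eq_zero_or_pos d with h | h
    · exfalso
      rw [h] at hfinrank
      haveI hsub : Subsingleton V := Module.finrank_zero_iff.mp hfinrank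
      apply CategoryTheory.id_nonzero V
      have : (𝟙 V : V ⟶ V).hom = (0 : V ⟶ V).hom := by
        ext v
        exact @Subsingleton.elim _ hsub _ _
      exact Action.Hom.ext this
    · exact h
  haveI : Nontrivial V := Module.nontrivial_of_finrank_pos (hfinrank ▸ hd0)
  have hdC : (d : ℂ) ≠ 0 := Nat.cast_ne_zero.mpr hd0.ne'
  -- conjugacy class
  set C : Finset G := Finset.univ.filter (fun h => IsConj g h) with hC
  have hcard : Nat.card {h : G | IsConj g h} = C.card := by
    rw [Nat.card_eq_fintype_card]
    apply Fintype.card_of_subtype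
    intro x
    simp [hC]
  -- the class sum endomorphism
  set T : V →ₗ[ℂ] V := ∑ h ∈ C, (V.ρ h : V →ₗ[ℂ] V) with hT
  have hTcomm : ∀ x : G, T ∘ₗ V.ρ x = (V.ρ x) ∘ₗ T := by
    intro x
    have h1 : T ∘ₗ V.ρ x = ∑ h ∈ C, (V.ρ (h * x) : V →ₗ[ℂ] V) := by
      apply LinearMap.ext; intro v
      simp [hT, LinearMap.sum_apply, map_mul, Module.End.mul_apply]
    have h2 : (V.ρ x) ∘ₗ T = ∑ h ∈ C, (V.ρ (x * h) : V →ₗ[ℂ] V) := by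
      apply LinearMap.ext; intro v
      simp [hT, LinearMap.sum_apply, map_mul, Module.End.mul_apply]
    rw [h1, h2]
    apply Finset.sum_nbij' (fun h => x⁻¹ * h * x) (fun h => x * h * x⁻¹)
    · intro a ha
      simp only [hC, Finset.mem_filter, Finset.mem_univ, true_and] at ha ⊢
      exact ha.trans (isConj_iff.mpr ⟨x⁻¹, by group⟩)
    · intro a ha
      simp only [hC, Finset.mem_filter, Finset.mem_univ, true_and] at ha ⊢
      exact ha.trans (isConj_iff.mpr ⟨x, by group⟩)
    · intro a _; group
    · intro a _; group
    · intro a _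
      congr 1
      group
  obtain ⟨c, hc⟩ := schur_scalar V T hTcomm
  have hTint : IsIntegral ℤ T := by
    apply ringrange_integral
    exact Submodule.sum_mem _ fun h _ => Submodule.subset_span ⟨h, rfl⟩
  -- the key equation : c * d = |C| * χ g
  have hχconst : ∀ h ∈ C, FDRep.character V h = FDRep.character V g := by
    intro h hh
    simp only [hC, Finset.mem_filter, Finset.mem_univ, true_and] at hh
    obtain ⟨u, hu⟩ := hh
    have := FDRep.char_conj V g u
    rw [← this]
    congr 1
    simp only [SemiconjBy] at hu
    rw [hu]
    group
  have htraceT : LinearMap.trace ℂ V T = C.card * χ g := by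
    rw [hT, map_sum]
    have : ∀ h ∈ C, LinearMap.trace ℂ V (V.ρ h) = χ g := by
      intro h hh
      rw [hchar]
      exact hχconst h hh
    rw [Finset.sum_congr rfl this, Finset.sum_const, nsmul_eq_mul]
  have hkey : c * d = C.card * χ g := by
    have h1 : LinearMap.trace ℂ V T = c * d := by
      rw [hc, map_smul, LinearMap.trace_id, smul_eq_mul, hfinrank]
    rw [← h1, htraceT]
  -- c is an algebraic integer
  have hcint : IsIntegral ℤ c := by
    obtain ⟨p, hpmonic, hpeval⟩ := hTint
    refine ⟨p, hpmonic, ?_⟩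
    have halg : T = algebraMap ℂ (V →ₗ[ℂ] V) c := by
      rw [hc, Algebra.algebraMap_eq_smul_one]; rfl
    rw [halg] at hpeval
    have h9 := Polynomial.aeval_algHom_apply ((Algebra.ofId ℂ (V →ₗ[ℂ] V)).restrictScalars ℤ) c p
    have h10 : (algebraMap ℂ (V →ₗ[ℂ] V)) (Polynomial.aeval c p) = 0 := h9.symm.trans hpeval
    have hinj : Function.Injective (algebraMap ℂ (V →ₗ[ℂ] V)) := by
      intro a b hab
      obtain ⟨v, hv⟩ := exists_ne (0 : V)
      have := congr_fun (congr_arg (fun (h : V →ₗ[ℂ] V) => (h : V → V)) hab) v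
      simp only [Algebra.algebraMap_eq_smul_one] at this
      have : a • v = b • v := this
      exact smul_left_injective ℂ hv this
    exact hinj (h10.trans (map_zero _).symm)
  -- eigenvalue multiset
  set n : ℕ := Fintype.card G with hn
  have hnpos : 0 < n := Fintype.card_pos
  have hρn : (V.ρ g : V →ₗ[ℂ] V) ^ n = 1 := by
    rw [← map_pow, pow_card_eq_one, map_one]
  obtain ⟨m, hmcard, hmroot, hmsum⟩ := trace_multiset (V.ρ g) n hρn
  have hχg : χ g = m.sum := by rw [hchar]; exact hmsum
  -- cyclotomic field
  haveI : NeZero ((n : ℕ) : ℚ) := ⟨Nat.cast_ne_zero.mpr hnpos.ne'⟩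
  set np : ℕ+ := ⟨n, hnpos⟩ with hnp
  set K := CyclotomicField np ℚ with hK
  haveI : NeZero (np : ℕ) := ⟨hnpos.ne'⟩
  haveI : IsCyclotomicExtension {(np : ℕ)} ℚ K := CyclotomicField.isCyclotomicExtension _ _
  haveI : NumberField K := IsCyclotomicExtension.numberField {(np : ℕ)} ℚ K
  set ζ : K := IsCyclotomicExtension.zeta np ℚ K with hζdef
  have hζ : IsPrimitiveRoot ζ n := IsCyclotomicExtension.zeta_spec np ℚ K
  set ι : K →ₐ[ℚ] ℂ := IsAlgClosed.lift with hι
  have hιζ : IsPrimitiveRoot (ι ζ) n := hζ.map_of_injective ι.injective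
  -- lift the eigenvalues to K
  set φ : ℂ → K := fun z =>
    if h : z ^ n = 1 then ζ ^ (hιζ.eq_pow_of_pow_eq_one h).choose else 1 with hφ
  have hφ1 : ∀ z : ℂ, (φ z) ^ n = 1 := by
    intro z
    by_cases h : z ^ n = 1
    · rw [hφ]
      simp only [dif_pos h]
      rw [← pow_mul, mul_comm, pow_mul, hζ.pow_eq_one, one_pow]
    · rw [hφ]
      simp only [dif_neg h, one_pow]
  have hφ2 : ∀ z : ℂ, z ^ n = 1 → ι (φ z) = z := by
    intro z h
    rw [hφ]
    simp only [dif_pos h]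
    rw [map_pow]
    exact (hιζ.eq_pow_of_pow_eq_one h).choose_spec.2
  set t : Multiset K := m.map φ with ht
  set s : K := t.sum with hs
  have hιs : ι s = χ g := by
    rw [hs, map_multiset_sum, ht, Multiset.map_map, hχg]
    congr 1
    have : m.map (⇑ι ∘ φ) = m.map id :=
      Multiset.map_congr rfl (fun z hz => hφ2 z (hmroot z hz))
    rw [this, Multiset.map_id]
  have hsint : IsIntegral ℤ s := by
    apply multiset_sum_integral
    intro z hz
    obtain ⟨y, _, rfl⟩ := Multiset.mem_map.mp hz
    exact pow_root_integral _ n hnpos (hφ1 y)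
  have htcard : Multiset.card t = d := by rw [ht, Multiset.card_map, hmcard, hfinrank]
  have hbound : ∀ σ : K →ₐ[ℚ] ℂ, ‖σ s‖ ≤ d := by
    intro σ
    rw [hs, map_multiset_sum]
    have hle := multiset_abs_sum_le (t.map σ) ?_
    · rwa [Multiset.card_map, htcard] at hle
    · intro z hz
      obtain ⟨y, hy, rfl⟩ := Multiset.mem_map.mp hz
      have hyn : y ^ n = 1 := by
        obtain ⟨w0, _, rfl⟩ := Multiset.mem_map.mp hy
        exact hφ1 w0
      have habs : ‖σ y‖ ^ n = 1 := by
        rw [← norm_pow, ← map_pow, hyn, map_one, norm_one]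
      rcases lt_trichotomy (‖σ y‖) 1 with h | h | h
      · exfalso
        have := pow_lt_one₀ (norm_nonneg _) h hnpos.ne'
        rw [habs] at this; exact lt_irrefl 1 this
      · exact h
      · exfalso
        have := one_lt_pow₀ h hnpos.ne'
        rw [habs] at this; exact lt_irrefl 1 this
  -- number field instances
  haveI : FiniteDimensional ℚ K := Module.Finite.of_restrictScalars_finite ℚ ℚ K
  -- the central character value as an element of K
  have hdK : (d : K) ≠ 0 := Nat.cast_ne_zero.mpr hd0.ne'
  set w : K := (C.card : K) * s / (d : K) with hw
  have hιw : ι w = c := by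
    rw [hw, map_div₀, map_mul, map_natCast, map_natCast, hιs, div_eq_iff hdC]
    exact hkey.symm
  have hwint : IsIntegral ℤ w := by
    have hint : IsIntegral ℤ (ι w) := hιw ▸ hcint
    exact (isIntegral_algHom_iff (ι.restrictScalars ℤ) ι.injective).mp hint
  -- Bezout
  obtain ⟨u, v, huv⟩ : ∃ u v : ℤ, (C.card : ℤ) * u + (d : ℤ) * v = 1 := by
    refine ⟨Nat.gcdA C.card d, Nat.gcdB C.card d, ?_⟩
    rw [← Nat.gcd_eq_gcd_ab]
    rw [hcard] at hcop
    exact_mod_cast hcop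
  set α : K := s / (d : K) with hα
  have hcast : (C.card : K) * (u : K) + (d : K) * (v : K) = 1 := by
    have := congr_arg (fun z : ℤ => (z : K)) huv
    rw [Int.cast_add, Int.cast_mul, Int.cast_mul, Int.cast_natCast, Int.cast_natCast,
      Int.cast_one] at this
    exact this
  have hαeq : α = (u : K) * w + (v : K) * s := by
    rw [hα, hw]
    simp only [div_eq_mul_inv]
    linear_combination (-s * (d : K)⁻¹) * hcast + (v * s) * mul_inv_cancel₀ hdK
  have hαint : IsIntegral ℤ α := by
    rw [hαeq]
    have h1 : IsIntegral ℤ ((u : ℤ) : K) := isIntegral_algebraMap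
    have h2 : IsIntegral ℤ ((v : ℤ) : K) := isIntegral_algebraMap
    exact (h1.mul hwint).add (h2.mul hsint)
  -- the norm argument
  have hnorm := Algebra.norm_eq_prod_embeddings ℚ ℂ α
  obtain ⟨z, hz⟩ : ∃ z : ℤ, (z : ℚ) = Algebra.norm ℚ α := by
    obtain ⟨z, hz⟩ := IsIntegrallyClosed.isIntegral_iff.mp (Algebra.isIntegral_norm ℚ hαint)
    exact ⟨z, by exact_mod_cast hz⟩
  have habsle : ∀ σ : K →ₐ[ℚ] ℂ, ‖σ α‖ ≤ 1 := by
    intro σ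
    rw [hα, map_div₀, map_natCast, norm_div, Complex.norm_natCast,
      div_le_one (by exact_mod_cast hd0)]
    exact hbound σ
  have hια : ι α = χ g / d := by rw [hα, map_div₀, map_natCast, hιs]
  rcases lt_or_eq_of_le (habsle ι) with hlt | heq
  · -- χ g = 0
    left
    have hprodlt : ∏ σ : K →ₐ[ℚ] ℂ, ‖σ α‖ < 1 := by
      rw [← Finset.mul_prod_erase Finset.univ _ (Finset.mem_univ ι)]
      have hrest : ∏ σ ∈ Finset.univ.erase ι, ‖σ α‖ ≤ 1 :=
        Finset.prod_le_one (fun σ _ => norm_nonneg _) (fun σ _ => habsle σ)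
      have hrest0 : (0:ℝ) ≤ ∏ σ ∈ Finset.univ.erase ι, ‖σ α‖ :=
        Finset.prod_nonneg (fun σ _ => norm_nonneg _)
      nlinarith [norm_nonneg (ι α)]
    have hzabs : |z| < 1 := by
      have h1 : ‖((z : ℚ) : ℂ)‖ < 1 := by
        rw [show (((z : ℚ)) : ℂ) = algebraMap ℚ ℂ (z : ℚ) from rfl, hz, hnorm, norm_prod]
        exact hprodlt
      have h2 : ‖((z : ℤ) : ℂ)‖ < 1 := by exact_mod_cast h1
      rw [Complex.norm_intCast] at h2
      exact_mod_cast h2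
    have hz0 : z = 0 := by
      have h3 := abs_lt.mp hzabs
      omega
    have hnorm0 : Algebra.norm ℚ α = 0 := by rw [← hz, hz0, Int.cast_zero]
    have hα0 : α = 0 := Algebra.norm_eq_zero_iff.mp hnorm0
    have : ι α = 0 := by rw [hα0, map_zero]
    rw [hια] at this
    exact (div_eq_zero_iff.mp this).resolve_right hdC
  · -- |χ g| = d
    right
    rw [hια, norm_div, Complex.norm_natCast] at heq
    field_simp at heq
    exact heq
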